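/- Let G be a finite simple graph of order n ≥ 2. Then adim_2(G) = n if and only if every vertex of G has a twin, i.e., every vertex belongs to a non-singleton twin equivalence class. -/

import Mathlib

open Finset

namespace AdjDim

noncomputable section
open Classical

variable {V W : Type*}

/-- Truncated distance `d_{G,2}(x,y) = min(d_G(x,y), 2)`:
`0` if `x = y`, `1` if `x` and `y` are adjacent, and `2` otherwise. -/
def d2 (G : SimpleGraph V) (x y : V) : ℕ :=
  if x = y then 0 else if G.Adj x y then 1 else 2

/-- `S` is a `k`-adjacency generator for `G`: every pair of distinct vertices is
distinguished (w.r.t. `d_{G,2}`) by at least `k` vertices of `S`. -/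
def IsKAdjGen (G : SimpleGraph V) [Fintype V] (k : ℕ) (S : Finset V) : Prop :=
  ∀ x y : V, x ≠ y → k ≤ (S.filter (fun w => d2 G x w ≠ d2 G y w)).card

/-- The `k`-adjacency dimension of `G`: the minimum cardinality of a
`k`-adjacency generator. -/
def adim (G : SimpleGraph V) [Fintype V] (k : ℕ) : ℕ :=
  sInf {n | ∃ S : Finset V, IsKAdjGen G k S ∧ S.card = n}

/-- `B` is a `k`-adjacency basis of `G`: a `k`-adjacency generator of minimum
cardinality. -/
def IsKAdjBasis (G : SimpleGraph V) [Fintype V] (k : ℕ) (B : Finset V) : Prop :=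
  IsKAdjGen G k B ∧ B.card = adim G k

/-- `G` is `k`-adjacency dimensional: `k` is the largest integer for which a
`k`-adjacency generator exists. -/
def IsKAdjDimensional (G : SimpleGraph V) [Fintype V] (k : ℕ) : Prop :=
  (∃ S : Finset V, IsKAdjGen G k S) ∧
    ∀ k' : ℕ, k < k' → ¬ ∃ S : Finset V, IsKAdjGen G k' S

/-- `C_G(x,y)`: the set of vertices distinguishing `x` and `y` w.r.t. `d_{G,2}`. -/
def CSet (G : SimpleGraph V) [Fintype V] (x y : V) : Finset V :=
  univ.filter (fun z => d2 G x z ≠ d2 G y z)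

/-- `C(G) = min_{x ≠ y} |C_G(x,y)|`. -/
def Cmin (G : SimpleGraph V) [Fintype V] : ℕ :=
  sInf {m | ∃ x y : V, x ≠ y ∧ (CSet G x y).card = m}

/-- `C_k(G)`: the union of the sets `C_G(x,y)` over pairs of distinct vertices
with `|C_G(x,y)| = k`. -/
def Ck (G : SimpleGraph V) [Fintype V] (k : ℕ) : Finset V :=
  univ.filter (fun z => ∃ x y : V, x ≠ y ∧ (CSet G x y).card = k ∧ z ∈ CSet G x y)

/-- Two distinct vertices `x, y` are twins: every other vertex is at the same
truncated distance from both. -/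
def Twins (G : SimpleGraph V) (x y : V) : Prop :=
  x ≠ y ∧ ∀ z : V, z ≠ x → z ≠ y → d2 G x z = d2 G y z

/-- The join `G + H` of two vertex-disjoint graphs. -/
def join (G : SimpleGraph V) (H : SimpleGraph W) : SimpleGraph (V ⊕ W) where
  Adj x y :=
    match x, y with
    | Sum.inl a, Sum.inl b => G.Adj a b
    | Sum.inr a, Sum.inr b => H.Adj a b
    | Sum.inl _, Sum.inr _ => True
    | Sum.inr _, Sum.inl _ => True
  symm := by
    constructor
    rintro (a | a) (b | b) h
    · exact SimpleGraph.Adj.symm h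
    · trivial
    · trivial
    · exact SimpleGraph.Adj.symm h
  loopless := by
    constructor
    rintro (a | a) h
    · exact G.irrefl h
    · exact H.irrefl h

/-- `K_1 + H`: the join of a one-vertex graph with `H`, i.e. `H` together with a
new universal vertex. -/
def K1join (H : SimpleGraph W) : SimpleGraph (Unit ⊕ W) :=
  join (⊥ : SimpleGraph Unit) H

lemma d2_self (G : SimpleGraph V) (x : V) : d2 G x x = 0 := if_pos rfl

lemma d2_ne_zero (G : SimpleGraph V) {x y : V} (h : x ≠ y) : d2 G x y ≠ 0 := by
  unfold d2; rw [if_neg h]; split <;> simp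

lemma gen_univ (G : SimpleGraph V) [Fintype V] : IsKAdjGen G 2 (univ : Finset V) := by
  intro x y hxy
  refine Finset.one_lt_card_iff.2 ⟨x, y, ?_, ?_, hxy⟩
  · simp [d2_self, (d2_ne_zero G (Ne.symm hxy)).symm]
  · simp [d2_self, d2_ne_zero G hxy]

lemma gen_erase (G : SimpleGraph V) [Fintype V] {x : V}
    (hx : ∀ y : V, ¬ Twins G x y) : IsKAdjGen G 2 ((univ : Finset V).erase x) := by
  intro u v huv
  by_cases hu : u = x
  · subst hu
    have := hx v
    rw [Twins] at this
    push_neg at this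
    obtain ⟨z, hz1, hz2, hz3⟩ := this huv
    refine Finset.one_lt_card_iff.2 ⟨z, v, ?_, ?_, hz2⟩
    · simp [hz1, hz3]
    · simp [Ne.symm huv, d2_self, d2_ne_zero G huv]
  · by_cases hv : v = x
    · subst hv
      have := hx u
      rw [Twins] at this
      push_neg at this
      obtain ⟨z, hz1, hz2, hz3⟩ := this (Ne.symm huv)
      refine Finset.one_lt_card_iff.2 ⟨z, u, ?_, ?_, hz2⟩
      · simp [hz1]; exact fun h => hz3 h.symm
      · simp [hu, d2_self]
        exact fun h => d2_ne_zero G (Ne.symm huv) h.symm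
    · refine Finset.one_lt_card_iff.2 ⟨u, v, ?_, ?_, huv⟩
      · simp [hu, d2_self, (d2_ne_zero G (Ne.symm huv)).symm]
      · simp [hv, d2_self, d2_ne_zero G huv]

/-- Corollary 3.5: for a graph of order `n ≥ 2`, `adim_2(G) = n` if and only
if every vertex has a twin. -/
theorem adim_two_eq_card_iff [Fintype V] (G : SimpleGraph V)
    (h : 2 ≤ Fintype.card V) :
    adim G 2 = Fintype.card V ↔ ∀ x : V, ∃ y : V, Twins G x y := by
  constructor
  · intro hadim
    by_contra hc
    push_neg at hc
    obtain ⟨x, hx⟩ := hc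
    have hle : adim G 2 ≤ Fintype.card V - 1 := by
      apply Nat.sInf_le
      exact ⟨(univ : Finset V).erase x, gen_erase G hx, by
        rw [Finset.card_erase_of_mem (Finset.mem_univ x), Finset.card_univ]⟩
    omega
  · intro htw
    have hne : {n | ∃ S : Finset V, IsKAdjGen G 2 S ∧ S.card = n}.Nonempty :=
      ⟨Fintype.card V, univ, gen_univ G, by simp⟩
    obtain ⟨S, hS, hcard⟩ := Nat.sInf_mem hne
    have hSu : S = univ := by
      apply Finset.eq_univ_of_forall
      intro x
      obtain ⟨y, hxy, hty⟩ := htw x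
      have h2 := hS x y hxy
      have hsub : S.filter (fun w => d2 G x w ≠ d2 G y w) ⊆ {x, y} := by
        intro w hw
        simp only [Finset.mem_filter] at hw
        by_contra hmem
        simp only [Finset.mem_insert, Finset.mem_singleton] at hmem
        push_neg at hmem
        exact hw.2 (hty w hmem.1 hmem.2)
      have hcard2 : ({x, y} : Finset V).card ≤ (S.filter (fun w => d2 G x w ≠ d2 G y w)).card := by
        rw [Finset.card_insert_of_notMem (by simp [hxy]), Finset.card_singleton]
        exact h2
      have := Finset.eq_of_subset_of_card_le hsub hcard2
      have hxmem : x ∈ S.filter (fun w => d2 G x w ≠ d2 G y w) := by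
        rw [this]; simp
      exact (Finset.mem_filter.1 hxmem).1
    rw [adim, ← hcard, hSu, Finset.card_univ]


end
end AdjDim
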